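/- Let n ≥ 1, let R be a commutative ring, and let Y₁,…,Yₙ ∈ R. Then det_{1≤i,j≤n}( h_{j−1}(Y₁,…,Y_i) ) = ∏_{l=1}^{n} Y_l^{l−1}. -/

import Mathlib

/-- The complete homogeneous symmetric polynomial of degree `k` in the variables given by the
list `l`: the sum of all monomials of total degree `k`. -/
def hh {R : Type*} [CommSemiring R] (k : ℕ) (l : List R) : R :=
  ∑ a ∈ Finset.Nat.antidiagonalTuple l.length k, ∏ i : Fin l.length, l.get i ^ a i

open PowerSeries in
lemma hh_eq_coeff {R : Type*} [CommSemiring R] (k : ℕ) (l : List R) :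
    hh k l = PowerSeries.coeff k ((l.map fun y => PowerSeries.mk fun t => y ^ t).prod) := by
  rw [← Fin.prod_univ_fun_getElem l (fun y => PowerSeries.mk fun t => y ^ t), PowerSeries.coeff_prod]
  simp only [PowerSeries.coeff_mk]
  rw [hh]
  refine Finset.sum_nbij' (fun a => Finsupp.equivFunOnFinite.symm a) (fun f => f) ?_ ?_ ?_ ?_ ?_
  · intro a ha
    rw [Finset.Nat.mem_antidiagonalTuple] at ha
    simp [Finset.mem_finsuppAntidiag, ha]
  · intro f hf
    rw [Finset.mem_finsuppAntidiag] at hf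
    rw [Finset.Nat.mem_antidiagonalTuple]
    simpa using hf.1
  · intro a _; ext i; simp [Finsupp.equivFunOnFinite]; rfl
  · intro f _; simp
  · intro a _
    apply Finset.prod_congr rfl
    intro i _
    simp [List.get_eq_getElem]

lemma hh_zero {R : Type*} [CommSemiring R] (l : List R) : hh 0 l = 1 := by
  simp [hh, Finset.Nat.antidiagonalTuple_zero_right]

lemma mk_geom {R : Type*} [CommSemiring R] (y : R) :
    PowerSeries.mk (fun t => y ^ t)
      = 1 + PowerSeries.C y * PowerSeries.X * PowerSeries.mk (fun t => y ^ t) := by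
  ext n
  cases n with
  | zero => simp
  | succ n =>
      rw [map_add, mul_assoc, PowerSeries.coeff_C_mul, PowerSeries.coeff_succ_X_mul]
      simp [pow_succ, mul_comm]

lemma hh_append_succ {R : Type*} [CommSemiring R] (k : ℕ) (l : List R) (y : R) :
    hh (k + 1) (l ++ [y]) = hh (k + 1) l + y * hh k (l ++ [y]) := by
  rw [hh_eq_coeff, hh_eq_coeff, hh_eq_coeff]
  rw [List.map_append, List.prod_append]
  simp only [List.map_cons, List.map_nil, List.prod_cons, List.prod_nil, mul_one]
  conv_lhs => rw [mk_geom y]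
  rw [mul_add, mul_one, map_add]
  congr 1
  rw [show (l.map fun y => PowerSeries.mk fun t => y ^ t).prod *
      (PowerSeries.C y * PowerSeries.X * PowerSeries.mk fun t => y ^ t)
    = PowerSeries.C y * (PowerSeries.X *
        ((l.map fun y => PowerSeries.mk fun t => y ^ t).prod * PowerSeries.mk fun t => y ^ t))
    by ring]
  rw [PowerSeries.coeff_C_mul, PowerSeries.coeff_succ_X_mul]

/-- The list of variables X_a, X_{a+1}, …, X_b (empty if a > b). -/
def seg {R : Type*} (X : ℕ → R) (a b : ℕ) : List R :=
  (List.range (b + 1 - a)).map fun t => X (a + t)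

lemma seg_succ {R : Type*} (Y : ℕ → R) (m : ℕ) :
    seg Y 1 (m + 1) = seg Y 1 m ++ [Y (m + 1)] := by
  simp [seg, List.range_succ, Nat.add_comm 1 m]

lemma detgen {R : Type*} [CommRing R] (Y : ℕ → R) : ∀ n s : ℕ,
    Matrix.det (Matrix.of fun i j : Fin n => hh (j : ℕ) (seg Y 1 ((i : ℕ) + 1 + s))) =
      ∏ i ∈ Finset.range n, Y (i + 1 + s) ^ i := by
  intro n
  induction n with
  | zero => intro s; simp [Matrix.det_fin_zero]
  | succ m ih =>
    intro s
    set B : Matrix (Fin (m + 1)) (Fin (m + 1)) R := Matrix.of fun i j =>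
      if i = 0 then hh (j : ℕ) (seg Y 1 (1 + s))
      else if (j : ℕ) = 0 then 0
      else Y ((i : ℕ) + 1 + s) * hh ((j : ℕ) - 1) (seg Y 1 ((i : ℕ) + 1 + s)) with hB
    have hdet : Matrix.det (Matrix.of fun i j : Fin (m+1) =>
        hh (j : ℕ) (seg Y 1 ((i : ℕ) + 1 + s))) = Matrix.det B := by
      apply Matrix.det_eq_of_forall_row_eq_smul_add_pred (fun _ => 1)
      · intro j
        simp [hB]
      · intro i j
        simp only [Matrix.of_apply, hB, one_mul]
        have hne : (i.succ : Fin (m + 1)) ≠ 0 := Fin.succ_ne_zero i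
        rw [if_neg hne]
        have hv : ((i.succ : Fin (m+1)) : ℕ) = (i : ℕ) + 1 := rfl
        have hv2 : ((i.castSucc : Fin (m+1)) : ℕ) = (i : ℕ) := rfl
        rw [hv, hv2]
        have hseg : seg Y 1 ((i : ℕ) + 1 + 1 + s) =
            seg Y 1 ((i : ℕ) + 1 + s) ++ [Y ((i : ℕ) + 1 + 1 + s)] := by
          rw [show (i : ℕ) + 1 + 1 + s = ((i : ℕ) + 1 + s) + 1 by ring, seg_succ]
        cases hj : (j : ℕ) with
        | zero =>
          rw [if_pos rfl, hseg, hh_zero, hh_zero, add_comm]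
          simp
        | succ k =>
          rw [if_neg (by omega)]
          rw [hseg, hh_append_succ]
          simp only [Nat.add_sub_cancel]
          ring
    rw [hdet, Matrix.det_succ_column_zero]
    have hcol : ∀ i : Fin (m + 1), B i 0 = if i = 0 then 1 else 0 := by
      intro i
      by_cases h : i = 0 <;> simp [hB, h, hh_zero]
    rw [Finset.sum_eq_single 0]
    · rw [hcol 0, if_pos rfl]
      simp only [Fin.val_zero, pow_zero, one_mul, mul_one]
      have hsub : B.submatrix (Fin.succAbove 0) Fin.succ =
          Matrix.of (fun i j : Fin m => Y ((i : ℕ) + 1 + 1 + s) *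
            (Matrix.of fun i j : Fin m => hh (j : ℕ) (seg Y 1 ((i : ℕ) + 1 + (s + 1)))) i j) := by
        ext i j
        simp only [Matrix.submatrix_apply, Matrix.of_apply, hB]
        rw [Fin.succAbove_zero]
        rw [if_neg (Fin.succ_ne_zero i)]
        have hv : ((i.succ : Fin (m+1)) : ℕ) = (i : ℕ) + 1 := rfl
        have hv' : ((j.succ : Fin (m+1)) : ℕ) = (j : ℕ) + 1 := rfl
        rw [hv, hv', if_neg (by omega)]
        simp only [Nat.add_sub_cancel]
        rw [show (i : ℕ) + 1 + (s + 1) = (i : ℕ) + 1 + 1 + s from by ring]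
      rw [hsub, Matrix.det_mul_column, ih (s + 1)]
      rw [Finset.prod_range_succ']
      rw [Fin.prod_univ_eq_prod_range (fun i => Y (i + 1 + 1 + s))]
      rw [← Finset.prod_mul_distrib]
      simp only [pow_zero, mul_one]
      apply Finset.prod_congr rfl
      intro i _
      rw [show i + 1 + (s + 1) = i + 1 + 1 + s by ring, ← pow_succ']
    · intro b _ hb
      rw [hcol b, if_neg hb]
      ring
    · intro h
      exact absurd (Finset.mem_univ 0) h

/-- The determinant evaluation used in Section 7.4 to compute det(B_n):
det_{1≤i,j≤n}( h_{j−1}(Y₁,…,Y_i) ) = ∏_{l=1}^{n} Y_l^{l−1}. -/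
theorem stmt13 {R : Type*} [CommRing R] (n : ℕ) (hn : 1 ≤ n) (Y : ℕ → R) :
    Matrix.det (Matrix.of fun i j : Fin n => hh (j : ℕ) (seg Y 1 ((i : ℕ) + 1))) =
      ∏ l ∈ Finset.Icc 1 n, Y l ^ (l - 1) := by
  have h := detgen Y n 0
  rw [show (Matrix.of fun i j : Fin n => hh (j : ℕ) (seg Y 1 ((i : ℕ) + 1)))
      = (Matrix.of fun i j : Fin n => hh (j : ℕ) (seg Y 1 ((i : ℕ) + 1 + 0))) from rfl]
  rw [h, ← Finset.Ico_add_one_right_eq_Icc, Finset.prod_Ico_eq_prod_range]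
  apply Finset.prod_congr (by simp)
  intro i _
  congr 1
  · congr 1; omega
  · omega
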